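/- For m > 2/√7 and m < 1, the interior critical point x_e of Ω with cos²x_e = (3m⁴ + m² - 4)/(3m⁴ - 6m²) satisfies x_e < x_c(m), where x_c(m) is the unique zero of Ω in (0,π/2); consequently Ω(x_e) < 0 and x_e is the location of the minimum of Ω on (0, π/2). -/

import Mathlib

set_option maxHeartbeats 1000000


/-- For `2/√7 < m < 1`, the interior critical point `x_e ∈ (0, π/2)` of `Ω`, with
`cos²x_e = (3m⁴ + m² - 4)/(3m⁴ - 6m²)`, satisfies `x_e < x_c(m)` where `x_c(m)` is the
unique zero of `Ω` in `(0, π/2)` (`cos²x_c = (4-m²-√(9m⁴+16(1-m²)))/(2m²)`);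
consequently `Ω(x_e) < 0` and `x_e` is the location of the minimum of `Ω` on
`(0, π/2)`. -/
theorem stmt18 (m : ℝ) (hm0 : 2 / Real.sqrt 7 < m) (hm1 : m < 1)
    (Ω : ℝ → ℝ)
    (hΩ : ∀ x, Ω x = (m ^ 2 / 4) *
      (m ^ 2 * Real.cos x ^ 4 + (m ^ 2 - 4) * Real.cos x ^ 2 + 2 * (1 - m ^ 2)) /
      (1 - m ^ 2 * Real.sin x ^ 2) ^ 2)
    (xe : ℝ) (hxe : xe ∈ Set.Ioo 0 (Real.pi / 2))
    (hxe2 : Real.cos xe ^ 2 = (3 * m ^ 4 + m ^ 2 - 4) / (3 * m ^ 4 - 6 * m ^ 2))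
    (xc : ℝ) (hxc : xc ∈ Set.Ioo 0 (Real.pi / 2))
    (hxc2 : Real.cos xc ^ 2 =
      (4 - m ^ 2 - Real.sqrt (9 * m ^ 4 + 16 * (1 - m ^ 2))) / (2 * m ^ 2))
    (hxcz : Ω xc = 0) :
    xe < xc ∧ Ω xe < 0 ∧ IsMinOn Ω (Set.Ioo 0 (Real.pi / 2)) xe := by
  have hpi := Real.pi_pos
  have h7 : (0:ℝ) < Real.sqrt 7 := Real.sqrt_pos.mpr (by norm_num)
  have hm : 0 < m := lt_trans (by positivity) hm0
  have hm2 : 0 < m ^ 2 := by positivity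
  have hm2' : m ^ 2 < 1 := by nlinarith
  have h1m : 0 < 1 - m ^ 2 := by linarith
  have h2m : 0 < 2 - m ^ 2 := by linarith
  have hne1 : m ≠ 0 := ne_of_gt hm
  have hne2 : (2 - m ^ 2) ≠ 0 := ne_of_gt h2m
  have hne3 : (1 - m ^ 2) ≠ 0 := ne_of_gt h1m
  have hB : (0:ℝ) < 3 * m ^ 2 * (2 - m ^ 2) := by positivity
  -- closed form for cos xe ^ 2
  have hce : Real.cos xe ^ 2 = (4 - m ^ 2 - 3 * m ^ 4) / (3 * m ^ 2 * (2 - m ^ 2)) := by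
    rw [hxe2]
    rw [div_eq_div_iff (by nlinarith) (ne_of_gt hB)]
    ring
  -- the square root
  set R := Real.sqrt (9 * m ^ 4 + 16 * (1 - m ^ 2)) with hRdef
  have hargpos : (0:ℝ) < 9 * m ^ 4 + 16 * (1 - m ^ 2) := by positivity
  have hR0 : 0 < R := Real.sqrt_pos.mpr hargpos
  have hR2 : R ^ 2 = 9 * m ^ 4 + 16 * (1 - m ^ 2) := Real.sq_sqrt (le_of_lt hargpos)
  have hRlt : R < 6 - 3 * m ^ 2 := by
    have h6 : (0:ℝ) < 6 - 3 * m ^ 2 := by linarith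
    nlinarith [hR2, hR0]
  -- cos xc ^ 2 < cos xe ^ 2
  have hsq : Real.cos xc ^ 2 < Real.cos xe ^ 2 := by
    rw [hce, hxc2, div_lt_div_iff₀ (by positivity) hB]
    have hint1 : 0 < m ^ 2 * (R * (6 - 3 * m ^ 2 - R)) := by
      apply mul_pos hm2 (mul_pos hR0 (by linarith))
    have hint2 : m ^ 2 * R ^ 2 = m ^ 2 * (9 * m ^ 4 + 16 * (1 - m ^ 2)) := by rw [hR2]
    nlinarith [hint1, hint2]
  -- part 1 : xe < xc
  have hcosxc : 0 < Real.cos xc :=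
    Real.cos_pos_of_mem_Ioo ⟨by linarith [hxc.1], hxc.2⟩
  have hcosxe : 0 < Real.cos xe :=
    Real.cos_pos_of_mem_Ioo ⟨by linarith [hxe.1], hxe.2⟩
  have hcoslt : Real.cos xc < Real.cos xe := by nlinarith [hsq, hcosxc, hcosxe]
  have hmemxe : xe ∈ Set.Icc 0 Real.pi := ⟨le_of_lt hxe.1, by linarith [hxe.2]⟩
  have hmemxc : xc ∈ Set.Icc 0 Real.pi := ⟨le_of_lt hxc.1, by linarith [hxc.2]⟩
  have h1 : xe < xc := (Real.strictAntiOn_cos.lt_iff_gt hmemxc hmemxe).mp hcoslt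
  -- value of the denominator at xe
  have hD : 1 - m ^ 2 * Real.sin xe ^ 2 =
      10 * m ^ 2 * (1 - m ^ 2) / (3 * m ^ 2 * (2 - m ^ 2)) := by
    rw [Real.sin_sq, hce]
    field_simp
    ring
  -- value of Ω at xe
  have hΩxe : Ω xe = -((9 * m ^ 4 - 16 * m ^ 2 + 16) / (80 * (1 - m ^ 2))) := by
    rw [hΩ, hD, show Real.cos xe ^ 4 = (Real.cos xe ^ 2) ^ 2 from by ring, hce]
    field_simp
    ring
  -- part 2 : Ω xe < 0
  have hnumpos : (0:ℝ) < 9 * m ^ 4 - 16 * m ^ 2 + 16 := by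
    nlinarith [sq_nonneg (3 * m ^ 2 - 3)]
  have h2 : Ω xe < 0 := by
    rw [hΩxe]
    have : 0 < (9 * m ^ 4 - 16 * m ^ 2 + 16) / (80 * (1 - m ^ 2)) :=
      div_pos hnumpos (by linarith)
    linarith
  refine ⟨h1, h2, ?_⟩
  -- part 3 : minimum
  rw [isMinOn_iff]
  intro x hx
  rw [hΩ x, hΩxe, Real.sin_sq]
  have ht0 : 0 ≤ Real.cos x ^ 2 := sq_nonneg _
  have ht1 : Real.cos x ^ 2 ≤ 1 := by
    nlinarith [Real.neg_one_le_cos x, Real.cos_le_one x]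
  have hDt : 0 < 1 - m ^ 2 * (1 - Real.cos x ^ 2) := by nlinarith
  rw [← neg_div, div_le_div_iff₀ (by positivity) (by positivity)]
  nlinarith [sq_nonneg (3 * m ^ 2 * Real.cos x ^ 2 * (2 - m ^ 2) + 3 * m ^ 4 + m ^ 2 - 4),
    sq_nonneg (Real.cos x)]
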